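/- Let $s_0, s_1, s_2, s_4$ be reals such that $\begin{pmatrix} s_0 & s_1 \\ s_1 & s_2 \end{pmatrix} > 0$ and $\begin{pmatrix} s_0 & s_2 \\ s_2 & s_4 \end{pmatrix} > 0$. Then there exists $s_3 \in \mathbb{R}$ such that the Hankel matrix $\begin{pmatrix} s_0 & s_1 & s_2 \\ s_1 & s_2 & s_3 \\ s_2 & s_3 & s_4 \end{pmatrix}$ is positive definite. Moreover, $s_3$ works if and only if $\frac{s_1 s_2 - \sqrt{P_1 P_2}}{s_0} < s_3 < \frac{s_1 s_2 + \sqrt{P_1 P_2}}{s_0}$, where $P_1 = s_0 s_2 - s_1^2$ and $P_2 = s_0 s_4 - s_2^2$. -/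

import Mathlib

theorem stmt_12 (s₀ s₁ s₂ s₄ : ℝ)
    (h₁ : (!![s₀, s₁; s₁, s₂]).PosDef)
    (h₂ : (!![s₀, s₂; s₂, s₄]).PosDef) :
    (∃ s₃ : ℝ, (!![s₀, s₁, s₂; s₁, s₂, s₃; s₂, s₃, s₄]).PosDef) ∧
    (∀ s₃ : ℝ, (!![s₀, s₁, s₂; s₁, s₂, s₃; s₂, s₃, s₄]).PosDef ↔
      ((s₁ * s₂ - Real.sqrt ((s₀ * s₂ - s₁ ^ 2) * (s₀ * s₄ - s₂ ^ 2))) / s₀ < s₃ ∧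
        s₃ < (s₁ * s₂ + Real.sqrt ((s₀ * s₂ - s₁ ^ 2) * (s₀ * s₄ - s₂ ^ 2))) / s₀)) := by
  have hs₀ : 0 < s₀ := by
    have := h₁.dotProduct_mulVec_pos (x := ![1, 0]) (by
      intro h
      have := congrFun h 0
      simp at this)
    simpa [Matrix.mulVec, dotProduct, Fin.sum_univ_two] using this
  have hP₁ : 0 < s₀ * s₂ - s₁ ^ 2 := by
    have := h₁.det_pos
    rw [Matrix.det_fin_two_of] at this
    nlinarith [this]
  have hP₂ : 0 < s₀ * s₄ - s₂ ^ 2 := by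
    have := h₂.det_pos
    rw [Matrix.det_fin_two_of] at this
    nlinarith [this]
  set P₁ := s₀ * s₂ - s₁ ^ 2 with hP₁def
  set P₂ := s₀ * s₄ - s₂ ^ 2 with hP₂def
  have hPP : 0 < P₁ * P₂ := mul_pos hP₁ hP₂
  -- key characterization
  have key : ∀ s₃ : ℝ,
      (!![s₀, s₁, s₂; s₁, s₂, s₃; s₂, s₃, s₄]).PosDef ↔
      (s₀ * s₃ - s₁ * s₂) ^ 2 < P₁ * P₂ := by
    intro s₃
    constructor
    · intro h
      have hdet := h.det_pos
      simp [Matrix.det_fin_three] at hdet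
      nlinarith [hdet, hs₀]
    · intro hb
      apply Matrix.PosDef.of_dotProduct_mulVec_pos
      · ext i j
        fin_cases i <;> fin_cases j <;> simp [Matrix.conjTranspose_apply, Matrix.vecHead, Matrix.vecTail]
      · intro x hx
        have hne : x 0 ≠ 0 ∨ x 1 ≠ 0 ∨ x 2 ≠ 0 := by
          by_contra hc
          push_neg at hc
          apply hx
          ext i
          fin_cases i <;> simp [hc.1, hc.2.1, hc.2.2]
        set a := x 0
        set b := x 1
        set c := x 2
        have hQ : dotProduct (star x) (Matrix.mulVec !![s₀, s₁, s₂; s₁, s₂, s₃; s₂, s₃, s₄] x)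
            = s₀*a^2 + s₂*b^2 + s₄*c^2 + 2*s₁*a*b + 2*s₂*a*c + 2*s₃*b*c := by
          simp [Matrix.mulVec, dotProduct, Fin.sum_univ_three]
          ring
        rw [hQ]
        have hid : s₀ * P₁ * (s₀*a^2 + s₂*b^2 + s₄*c^2 + 2*s₁*a*b + 2*s₂*a*c + 2*s₃*b*c)
            = P₁ * (s₀*a + s₁*b + s₂*c)^2 + (P₁*b + (s₀*s₃ - s₁*s₂)*c)^2
              + (P₁*P₂ - (s₀*s₃ - s₁*s₂)^2) * c^2 := by
          rw [hP₁def, hP₂def]; ring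
        have h1 : 0 ≤ P₁ * (s₀*a + s₁*b + s₂*c)^2 := by positivity
        have h2 : 0 ≤ (P₁*b + (s₀*s₃ - s₁*s₂)*c)^2 := sq_nonneg _
        have h3 : 0 ≤ (P₁*P₂ - (s₀*s₃ - s₁*s₂)^2) * c^2 :=
          mul_nonneg (sub_pos.mpr hb).le (sq_nonneg c)
        have hsp : 0 < s₀ * P₁ := mul_pos hs₀ hP₁
        have hQpos : 0 < s₀ * P₁ *
            (s₀*a^2 + s₂*b^2 + s₄*c^2 + 2*s₁*a*b + 2*s₂*a*c + 2*s₃*b*c) := by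
          rcases eq_or_ne c 0 with hc | hc
          · rcases eq_or_ne b 0 with hb' | hb'
            · have ha : a ≠ 0 := by tauto
              have he : s₀*a + s₁*b + s₂*c = s₀*a := by rw [hb', hc]; ring
              have h1' : 0 < P₁ * (s₀*a + s₁*b + s₂*c)^2 := by
                rw [he]; positivity
              linarith [hid, h1', h2, h3]
            · have he : P₁*b + (s₀*s₃ - s₁*s₂)*c = P₁*b := by rw [hc]; ring
              have h2' : 0 < (P₁*b + (s₀*s₃ - s₁*s₂)*c)^2 := by
                rw [he]; positivity
              linarith [hid, h1, h2', h3]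
          · have h3' : 0 < (P₁*P₂ - (s₀*s₃ - s₁*s₂)^2) * c^2 := by
              have : 0 < c^2 := by positivity
              exact mul_pos (sub_pos.mpr hb) this
            linarith [hid, h1, h2, h3']
        nlinarith [hQpos, hsp]
  have hsq : Real.sqrt (P₁ * P₂) ^ 2 = P₁ * P₂ := Real.sq_sqrt hPP.le
  have hsqpos : 0 < Real.sqrt (P₁ * P₂) := Real.sqrt_pos.mpr hPP
  have interval : ∀ s₃ : ℝ,
      ((s₁ * s₂ - Real.sqrt (P₁ * P₂)) / s₀ < s₃ ∧
        s₃ < (s₁ * s₂ + Real.sqrt (P₁ * P₂)) / s₀) ↔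
      (s₀ * s₃ - s₁ * s₂) ^ 2 < P₁ * P₂ := by
    intro s₃
    rw [div_lt_iff₀ hs₀, lt_div_iff₀ hs₀]
    constructor
    · rintro ⟨hl, hr⟩
      nlinarith
    · intro h
      have h' : (s₀ * s₃ - s₁ * s₂) ^ 2 < Real.sqrt (P₁ * P₂) ^ 2 := by
        rw [hsq]; exact h
      have habs := abs_lt.mp (abs_lt_of_sq_lt_sq h' hsqpos.le)
      constructor
      · nlinarith [habs.1]
      · nlinarith [habs.2]
  constructor
  · refine ⟨s₁ * s₂ / s₀, (key _).mpr ?_⟩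
    have : s₀ * (s₁ * s₂ / s₀) - s₁ * s₂ = 0 := by field_simp; ring
    rw [this]
    simpa using hPP
  · intro s₃
    rw [key s₃, ← interval s₃]
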